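/- For reals p ≥ ε > 0 and p̂ ≥ 0, if |p̂ - p| ≤ √(ε p), then |p̂^{1/3} - p^{1/3}| ≤ ε^{1/3}. -/
import Mathlib

open Real

/-- If `ε > 0`, `p ≥ ε`, `p̂ ≥ 0` and `|p̂ - p| ≤ √(ε p)`, then
`|p̂^{1/3} - p^{1/3}| ≤ ε^{1/3}`. -/
theorem cbrt_estimate_error (p phat ε : ℝ) (hε : 0 < ε) (hp : ε ≤ p)
    (hphat : 0 ≤ phat) (h : |phat - p| ≤ Real.sqrt (ε * p)) :
    |phat ^ ((1 : ℝ) / 3) - p ^ ((1 : ℝ) / 3)| ≤ ε ^ ((1 : ℝ) / 3) := by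
  have hp0 : 0 < p := lt_of_lt_of_le hε hp
  set a := phat ^ ((1 : ℝ) / 3) with ha_def
  set b := p ^ ((1 : ℝ) / 3) with hb_def
  have ha : 0 ≤ a := Real.rpow_nonneg hphat _
  have hb : 0 < b := Real.rpow_pos_of_pos hp0 _
  have ha3 : a ^ 3 = phat := by
    rw [ha_def, ← Real.rpow_natCast (phat ^ ((1:ℝ)/3)) 3, ← Real.rpow_mul hphat]
    norm_num
  have hb3 : b ^ 3 = p := by
    rw [hb_def, ← Real.rpow_natCast (p ^ ((1:ℝ)/3)) 3, ← Real.rpow_mul hp0.le]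
    norm_num
  have key : |a - b| * b ^ 2 ≤ |phat - p| := by
    have heq : phat - p = (a - b) * (a ^ 2 + a * b + b ^ 2) := by
      rw [← ha3, ← hb3]; ring
    rw [heq, abs_mul, abs_of_nonneg (by nlinarith : (0:ℝ) ≤ a ^ 2 + a * b + b ^ 2)]
    nlinarith [mul_le_mul_of_nonneg_left (show b ^ 2 ≤ a ^ 2 + a * b + b ^ 2 by nlinarith) (abs_nonneg (a - b))]
  have hsqrt : Real.sqrt (ε * p) ≤ ε ^ ((1 : ℝ) / 3) * b ^ 2 := by
    have h1 : Real.sqrt (ε * p) = ε ^ ((1:ℝ)/2) * p ^ ((1:ℝ)/2) := by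
      rw [Real.sqrt_eq_rpow, Real.mul_rpow hε.le hp0.le]
    have h2 : b ^ 2 = p ^ ((2:ℝ)/3) := by
      rw [hb_def, ← Real.rpow_natCast (p ^ ((1:ℝ)/3)) 2, ← Real.rpow_mul hp0.le]
      norm_num
    rw [h1, h2]
    have h3 : ε ^ ((1:ℝ)/2) = ε ^ ((1:ℝ)/3) * ε ^ ((1:ℝ)/6) := by
      rw [← Real.rpow_add hε]; norm_num
    have h4 : p ^ ((2:ℝ)/3) = p ^ ((1:ℝ)/2) * p ^ ((1:ℝ)/6) := by
      rw [← Real.rpow_add hp0]; norm_num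
    rw [h3, h4]
    have h5 : ε ^ ((1:ℝ)/6) ≤ p ^ ((1:ℝ)/6) :=
      Real.rpow_le_rpow hε.le hp (by norm_num)
    have hεp : (0:ℝ) ≤ ε ^ ((1:ℝ)/3) := Real.rpow_nonneg hε.le _
    have hpp : (0:ℝ) ≤ p ^ ((1:ℝ)/2) := Real.rpow_nonneg hp0.le _
    have hεh : (0:ℝ) ≤ ε ^ ((1:ℝ)/6) := Real.rpow_nonneg hε.le _
    nlinarith [mul_le_mul_of_nonneg_left (mul_le_mul_of_nonneg_right h5 hpp) hεp]
  have hfinal : |a - b| * b ^ 2 ≤ ε ^ ((1:ℝ)/3) * b ^ 2 :=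
    key.trans (h.trans hsqrt)
  have hb2 : 0 < b ^ 2 := by positivity
  exact le_of_mul_le_mul_right hfinal hb2
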